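/- Let p be a prime and let r, m be positive integers with m = r+2. Then the sequence e ↦ (c_{p,r,m,e})^{1/e} (for e ≥ 2) converges, as e → ∞, to binom(p+m−2, m−1). (Equivalently, the complexity of T(V_{m−2}(K[x_1,…,x_m])) equals binom(p+m−2, m−1), so the Frobenius complexity of the determinantal ring S_{m,2} equals log_p binom(p+m−2, m−1).) -/

import Mathlib

/-- `cSeq p r m e` is the number of `m`-tuples `(a_1,…,a_m)` of natural numbers with
`a_1+⋯+a_m = r(p^e−1)` such that `(a_1 mod p^i)+⋯+(a_m mod p^i) ≥ r(p^i−1)+p^i`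
for every `1 ≤ i ≤ e−1`; this is the `e`-th term of the complexity sequence of
the ring `T(V_r(K[x_1,…,x_m]))` of Enescu–Yao. -/
noncomputable def cSeq (p r m e : ℕ) : ℕ :=
  Nat.card {a : Fin m → ℕ // (∑ j, a j = r * (p ^ e - 1)) ∧
    ∀ i, 1 ≤ i → i ≤ e - 1 → r * (p ^ i - 1) + p ^ i ≤ ∑ j, a j % p ^ i}


lemma EY.mod_pow_succ (a p i : ℕ) :
    a % p ^ (i + 1) = a % p + p * (a / p % p ^ i) := by
  rcases Nat.eq_zero_or_pos p with hp | hp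
  · subst hp; simp
  have h1 : p ^ (i+1) = p * p ^ i := by ring
  rw [h1]
  have h2 : a % (p * p ^ i) % p = a % p := Nat.mod_mod_of_dvd a ⟨p ^ i, rfl⟩
  have h3 : a % (p * p ^ i) / p = a / p % p ^ i := Nat.mod_mul_right_div_self a p (p ^ i)
  conv_lhs => rw [← Nat.div_add_mod (a % (p * p ^ i)) p, h2, h3]
  omega

lemma EY.card_split (p m n S S' s : ℕ) (u t : ℕ → ℕ) (hp : 0 < p) (hn : 1 ≤ n)
    (hS : S = s + p * S') (ht1 : t 1 = s)
    (hti : ∀ i, 1 ≤ i → t (i + 1) = s + p * u i) :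
    Nat.card {a : Fin m → ℕ // (∑ j, a j = S) ∧
        ∀ i, 1 ≤ i → i ≤ n → ∑ j, a j % p ^ i = t i}
      = Nat.card {d : Fin m → ℕ // (∀ j, d j < p) ∧ ∑ j, d j = s}
        * Nat.card {b : Fin m → ℕ // (∑ j, b j = S') ∧
            ∀ i, 1 ≤ i → i ≤ n - 1 → ∑ j, b j % p ^ i = u i} := by
  rw [← Nat.card_prod]
  apply Nat.card_congr
  have modp : ∀ (d b : ℕ), d < p → (d + p * b) % p = d := by
    intro d b hd
    simp [Nat.add_mul_mod_self_left, Nat.mod_eq_of_lt hd]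
  have divp : ∀ (d b : ℕ), d < p → (d + p * b) / p = b := by
    intro d b hd
    rw [Nat.add_mul_div_left _ _ hp, Nat.div_eq_of_lt hd, zero_add]
  refine ⟨fun a => ⟨⟨fun j => a.1 j % p, fun j => Nat.mod_lt _ hp, ?_⟩,
      ⟨fun j => a.1 j / p, ?_, ?_⟩⟩,
    fun db => ⟨fun j => db.1.1 j + p * db.2.1 j, ?_, ?_⟩, ?_, ?_⟩
  · have := a.2.2 1 le_rfl hn
    rwa [pow_one, ht1] at this
  · have hsum : ∑ j, a.1 j = ∑ j, (a.1 j % p + p * (a.1 j / p)) := by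
      refine Finset.sum_congr rfl fun j _ => ?_
      rw [Nat.mod_add_div]
    rw [a.2.1] at hsum
    have h1 : ∑ j, a.1 j % p = s := by
      have := a.2.2 1 le_rfl hn
      rwa [pow_one, ht1] at this
    rw [Finset.sum_add_distrib, h1, ← Finset.mul_sum] at hsum
    show ∑ j, a.1 j / p = S'
    exact Nat.eq_of_mul_eq_mul_left hp (Nat.add_left_cancel (hsum.symm.trans hS))
  · intro i hi1 hin
    have hin' : i + 1 ≤ n := by omega
    have ha := a.2.2 (i + 1) (by omega) hin'
    have h1 : ∑ j, a.1 j % p = s := by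
      have := a.2.2 1 le_rfl hn
      rwa [pow_one, ht1] at this
    have hexp : ∑ j, a.1 j % p ^ (i + 1)
        = ∑ j, a.1 j % p + p * ∑ j, (a.1 j / p) % p ^ i := by
      rw [Finset.mul_sum, ← Finset.sum_add_distrib]
      exact Finset.sum_congr rfl fun j _ => EY.mod_pow_succ _ _ _
    rw [hexp, h1, hti i hi1] at ha
    show ∑ j, (a.1 j / p) % p ^ i = u i
    exact Nat.eq_of_mul_eq_mul_left hp (Nat.add_left_cancel ha)
  · rw [Finset.sum_add_distrib, db.1.2.2, ← Finset.mul_sum, db.2.2.1, hS]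
  · intro i hi1 hin
    rcases Nat.exists_eq_add_of_le hi1 with ⟨i', rfl⟩
    rcases Nat.eq_zero_or_pos i' with rfl | hi'
    · simp only [Nat.add_zero] at hin ⊢
      rw [pow_one, ht1]
      exact (Finset.sum_congr rfl fun j _ => modp _ _ (db.1.2.1 j)).trans db.1.2.2
    · have : (fun j => (db.1.1 j + p * db.2.1 j) % p ^ (1 + i'))
          = fun j => db.1.1 j + p * (db.2.1 j % p ^ i') := by
        funext j
        rw [show 1 + i' = i' + 1 by omega, EY.mod_pow_succ,
          modp _ _ (db.1.2.1 j), divp _ _ (db.1.2.1 j)]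
      rw [this, Finset.sum_add_distrib, db.1.2.2, ← Finset.mul_sum,
        db.2.2.2 i' hi' (by omega), show 1 + i' = i' + 1 by omega, hti i' hi']
  · intro a
    apply Subtype.ext
    funext j
    exact Nat.mod_add_div _ _
  · intro db
    refine Prod.ext (Subtype.ext (funext fun j => ?_)) (Subtype.ext (funext fun j => ?_))
    · exact modp _ _ (db.1.2.1 j)
    · exact divp _ _ (db.1.2.1 j)

/-- The `B`-family of tuple sets. -/
def EY.B (p r m n : ℕ) : Type :=
  {b : Fin m → ℕ // (∑ j, b j = r * p ^ n - (r + 1)) ∧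
    ∀ i, 1 ≤ i → i ≤ n - 1 → ∑ j, b j % p ^ i = (r + 1) * (p ^ i - 1)}

lemma EY.cardA_split (p r e : ℕ) (hp : 2 ≤ p) (hr : 1 ≤ r) (he : 2 ≤ e) :
    Nat.card {a : Fin (r + 2) → ℕ // (∑ j, a j = r * (p ^ e - 1)) ∧
        ∀ i, 1 ≤ i → i ≤ e - 1 → ∑ j, a j % p ^ i = (r + 1) * p ^ i - r}
      = Nat.card {d : Fin (r + 2) → ℕ // (∀ j, d j < p) ∧ ∑ j, d j = (r + 1) * p - r}
        * Nat.card (EY.B p r (r + 2) (e - 1)) := by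
  obtain ⟨k, rfl⟩ : ∃ k, e = k + 2 := ⟨e - 2, by omega⟩
  have hq1 : 1 ≤ p ^ (k + 1) := Nat.one_le_pow _ _ (by omega)
  have hq2 : 2 ≤ p ^ (k + 1) := by
    calc 2 ≤ p := hp
    _ = p ^ 1 := (pow_one p).symm
    _ ≤ p ^ (k + 1) := Nat.pow_le_pow_right (by omega) (by omega)
  have := EY.card_split p (r + 2) (k + 1) (r * (p ^ (k + 2) - 1))
    (r * p ^ (k + 1) - (r + 1)) ((r + 1) * p - r)
    (fun i => (r + 1) * (p ^ i - 1)) (fun i => (r + 1) * p ^ i - r)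
    (by omega) (by omega)
    (by -- hS
      have h1 : 1 ≤ p ^ (k + 2) := Nat.one_le_pow _ _ (by omega)
      have h2 : r + 1 ≤ r * p ^ (k + 1) := by nlinarith
      have h3 : r ≤ (r + 1) * p := by nlinarith
      zify [h1, h2, h3]
      push_cast [pow_succ]
      ring)
    (by -- ht1
      simp only [pow_one])
    (by -- hti
      intro i hi
      have h1 : 1 ≤ p ^ i := Nat.one_le_pow _ _ (by omega)
      have h2 : r ≤ (r + 1) * p ^ (i + 1) := by nlinarith [Nat.one_le_pow (i+1) p (by omega : 0 < p)]
      have h3 : r ≤ (r + 1) * p := by nlinarith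
      zify [h1, h2, h3]
      push_cast [pow_succ]
      ring)
  exact this

lemma EY.cardB_split (p r n : ℕ) (hp : 2 ≤ p) (hr : 1 ≤ r) (hn : 2 ≤ n) :
    Nat.card (EY.B p r (r + 2) n)
      = Nat.card {d : Fin (r + 2) → ℕ // (∀ j, d j < p) ∧ ∑ j, d j = (r + 1) * (p - 1)}
        * Nat.card (EY.B p r (r + 2) (n - 1)) := by
  obtain ⟨k, rfl⟩ : ∃ k, n = k + 2 := ⟨n - 2, by omega⟩
  have hq2 : 2 ≤ p ^ (k + 1) := by
    calc 2 ≤ p := hp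
    _ = p ^ 1 := (pow_one p).symm
    _ ≤ p ^ (k + 1) := Nat.pow_le_pow_right (by omega) (by omega)
  have := EY.card_split p (r + 2) (k + 1) (r * p ^ (k + 2) - (r + 1))
    (r * p ^ (k + 1) - (r + 1)) ((r + 1) * (p - 1))
    (fun i => (r + 1) * (p ^ i - 1)) (fun i => (r + 1) * (p ^ i - 1))
    (by omega) (by omega)
    (by -- hS
      have hq3 : 2 ≤ p ^ (k + 2) := by
        calc 2 ≤ p := hp
        _ = p ^ 1 := (pow_one p).symm
        _ ≤ p ^ (k + 2) := Nat.pow_le_pow_right (by omega) (by omega)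
      have h1 : r + 1 ≤ r * p ^ (k + 2) := by nlinarith
      have h2 : r + 1 ≤ r * p ^ (k + 1) := by nlinarith
      zify [h1, h2, (by omega : 1 ≤ p)]
      push_cast [pow_succ]
      ring)
    (by simp only [pow_one])
    (by -- hti
      intro i hi
      have h1 : 1 ≤ p ^ i := Nat.one_le_pow _ _ (by omega)
      have h2 : 1 ≤ p ^ (i + 1) := Nat.one_le_pow _ _ (by omega)
      zify [h1, h2, (by omega : 1 ≤ p)]
      push_cast [pow_succ]
      ring)
  exact this

lemma EY.finite_aux {m S : ℕ} (P : (Fin m → ℕ) → Prop) :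
    Finite {a : Fin m → ℕ // (∑ j, a j = S) ∧ P a} := by
  have h : Set.Finite {a : Fin m → ℕ | (∑ j, a j = S) ∧ P a} := by
    apply Set.Finite.subset (Finset.Nat.antidiagonalTuple m S).finite_toSet
    intro a ha
    simp only [Finset.coe_sort_coe, Finset.mem_coe, Finset.Nat.mem_antidiagonalTuple]
    exact ha.1
  exact h.to_subtype

lemma EY.cardB_formula (p r : ℕ) (hp : 2 ≤ p) (hr : 1 ≤ r) :
    ∀ n, 1 ≤ n → Nat.card (EY.B p r (r + 2) n)
      = (Nat.card {d : Fin (r + 2) → ℕ // (∀ j, d j < p) ∧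
          ∑ j, d j = (r + 1) * (p - 1)}) ^ (n - 1) * Nat.card (EY.B p r (r + 2) 1) := by
  intro n hn
  induction n, hn using Nat.le_induction with
  | base => simp
  | succ n hn ih =>
    have hsplit := EY.cardB_split p r (n + 1) hp hr (Nat.succ_le_succ hn)
    rw [show n + 1 - 1 = n from rfl] at hsplit
    rw [hsplit, ih, ← mul_assoc, ← pow_succ', Nat.sub_add_cancel hn,
      show n + 1 - 1 = n from rfl]

lemma EY.card_sum_eq (m c : ℕ) :
    Nat.card {d : Fin m → ℕ // ∑ j, d j = c} = (m + c - 1).choose c := by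
  rw [← Nat.card_congr (Sym.equivNatSumOfFintype (Fin m) c)]
  rw [Nat.card_eq_fintype_card, Sym.card_sym_eq_choose]
  simp

lemma EY.card_reflect (p m s c : ℕ) (hp : 1 ≤ p) (hc : s + c = m * (p - 1))
    (hcp : c ≤ p - 1) :
    Nat.card {d : Fin m → ℕ // (∀ j, d j < p) ∧ ∑ j, d j = s}
      = Nat.card {d : Fin m → ℕ // ∑ j, d j = c} := by
  apply Nat.card_congr
  have key : ∀ (d : Fin m → ℕ), (∀ j, d j ≤ p - 1) →
      (∑ j, d j) + ∑ j, (p - 1 - d j) = m * (p - 1) := by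
    intro d hd
    rw [← Finset.sum_add_distrib]
    have hcong : ∑ j, (d j + (p - 1 - d j)) = ∑ _j : Fin m, (p - 1) :=
      Finset.sum_congr rfl (fun j _ => by have := hd j; omega)
    rw [hcong]
    simp [Finset.sum_const, mul_comm]
  refine ⟨fun d => ⟨fun j => p - 1 - d.1 j, ?_⟩, fun e => ⟨fun j => p - 1 - e.1 j, ?_, ?_⟩, ?_, ?_⟩
  · show ∑ j, (p - 1 - d.1 j) = c
    have := key d.1 (fun j => by have := d.2.1 j; omega)
    rw [d.2.2] at this
    omega
  · intro j
    show p - 1 - e.1 j < p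
    omega
  · show ∑ j, (p - 1 - e.1 j) = s
    have hle : ∀ j, e.1 j ≤ p - 1 := by
      intro j
      have : e.1 j ≤ ∑ j, e.1 j := Finset.single_le_sum (fun _ _ => Nat.zero_le _) (Finset.mem_univ j)
      omega
    have := key e.1 hle
    rw [e.2] at this
    omega
  · intro d
    apply Subtype.ext; funext j
    have := d.2.1 j
    show p - 1 - (p - 1 - d.1 j) = d.1 j
    omega
  · intro e
    apply Subtype.ext; funext j
    have : e.1 j ≤ p - 1 := by
      have : e.1 j ≤ ∑ j, e.1 j := Finset.single_le_sum (fun _ _ => Nat.zero_le _) (Finset.mem_univ j)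
      omega
    show p - 1 - (p - 1 - e.1 j) = e.1 j
    omega

lemma EY.cSeq_eq_cardA (p r e : ℕ) (hp : 2 ≤ p) :
    cSeq p r (r + 2) e = Nat.card {a : Fin (r + 2) → ℕ //
      (∑ j, a j = r * (p ^ e - 1)) ∧
      ∀ i, 1 ≤ i → i ≤ e - 1 → ∑ j, a j % p ^ i = (r + 1) * p ^ i - r} := by
  unfold cSeq
  apply Nat.card_congr
  apply Equiv.subtypeEquivRight
  intro a
  have main : ∀ i, 1 ≤ i → i ≤ e - 1 → (∑ j, a j = r * (p ^ e - 1)) →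
      (r * (p ^ i - 1) + p ^ i ≤ ∑ j, a j % p ^ i ↔
        ∑ j, a j % p ^ i = (r + 1) * p ^ i - r) := by
    intro i hi1 hie hsum
    have hP1 : 1 ≤ p ^ i := Nat.one_le_pow _ _ (by omega)
    have hP2 : 2 ≤ p ^ i := by
      calc 2 ≤ p := hp
      _ = p ^ 1 := (pow_one p).symm
      _ ≤ p ^ i := Nat.pow_le_pow_right (by omega) hi1
    have hPpos : 0 < p ^ i := by omega
    constructor
    · intro hineq
      have hkey : (∑ j, a j % p ^ i) % p ^ i = (∑ j, a j) % p ^ i :=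
        (Finset.sum_nat_mod _ _ _).symm
      have h1e : 1 ≤ p ^ e := Nat.one_le_pow _ _ (by omega)
      have h0 : (∑ j, a j) + r = r * p ^ e := by
        rw [hsum]; zify [h1e]; ring
      have hdd : p ^ i ∣ r * p ^ e := Dvd.dvd.mul_left (pow_dvd_pow p (by omega : i ≤ e)) r
      have hdvd : p ^ i ∣ (∑ j, a j % p ^ i) + r := by
        have hmm : ((∑ j, a j % p ^ i) + r) % p ^ i = (r * p ^ e) % p ^ i := by
          rw [Nat.add_mod, hkey, ← Nat.add_mod, h0]
        rw [Nat.mod_eq_zero_of_dvd hdd] at hmm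
        exact Nat.dvd_of_mod_eq_zero hmm
      obtain ⟨k, hk⟩ := hdvd
      have hub : ∑ j, a j % p ^ i ≤ (r + 2) * (p ^ i - 1) := by
        calc ∑ j, a j % p ^ i ≤ ∑ _j : Fin (r + 2), (p ^ i - 1) :=
              Finset.sum_le_sum (fun j _ => by
                have := Nat.mod_lt (a j) hPpos; omega)
        _ = (r + 2) * (p ^ i - 1) := by simp [Finset.sum_const, mul_comm]
      have hklt : k < r + 2 := by
        apply Nat.lt_of_mul_lt_mul_left (a := p ^ i)
        rw [← hk]
        zify [hP1]
        zify [hP1] at hub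
        linarith
      have hkge : r + 1 ≤ k := by
        apply Nat.le_of_mul_le_mul_left ?_ hPpos
        rw [← hk]
        zify [hP1] at hineq ⊢
        linarith
      have hkk : k = r + 1 := by omega
      subst hkk
      exact Nat.eq_sub_of_add_eq (by rw [hk]; ring)
    · intro heq
      rw [heq]
      have h2 : r ≤ (r + 1) * p ^ i := by
        calc r ≤ r + 1 := by omega
        _ ≤ (r + 1) * p ^ i := Nat.le_mul_of_pos_right _ hPpos
      zify [h2, hP1]
      linarith
  constructor
  · rintro ⟨h1, h2⟩
    exact ⟨h1, fun i hi1 hie => (main i hi1 hie h1).mp (h2 i hi1 hie)⟩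
  · rintro ⟨h1, h2⟩
    exact ⟨h1, fun i hi1 hie => (main i hi1 hie h1).mpr (h2 i hi1 hie)⟩

lemma EY.cSeq_formula (p r e : ℕ) (hp : 2 ≤ p) (hr : 1 ≤ r) (he : 2 ≤ e) :
    cSeq p r (r + 2) e
      = (Nat.card {d : Fin (r + 2) → ℕ // (∀ j, d j < p) ∧ ∑ j, d j = (r + 1) * p - r}
          * Nat.card (EY.B p r (r + 2) 1))
        * (Nat.card {d : Fin (r + 2) → ℕ // (∀ j, d j < p) ∧
            ∑ j, d j = (r + 1) * (p - 1)}) ^ (e - 2) := by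
  rw [EY.cSeq_eq_cardA p r e hp, EY.cardA_split p r e hp hr he,
    EY.cardB_formula p r hp hr (e - 1) (by omega), show e - 1 - 1 = e - 2 by omega]
  ring

lemma EY.N_val (p r : ℕ) (hp : 2 ≤ p) :
    Nat.card {d : Fin (r + 2) → ℕ // (∀ j, d j < p) ∧ ∑ j, d j = (r + 1) * (p - 1)}
      = (p + r).choose (p - 1) := by
  rw [EY.card_reflect p (r + 2) _ (p - 1) (by omega) (by ring) le_rfl, EY.card_sum_eq]
  congr 1
  omega

lemma EY.N1_val (p r : ℕ) (hp : 2 ≤ p) :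
    Nat.card {d : Fin (r + 2) → ℕ // (∀ j, d j < p) ∧ ∑ j, d j = (r + 1) * p - r}
      = (p + r - 1).choose (p - 2) := by
  have h : r ≤ (r + 1) * p := by nlinarith
  rw [EY.card_reflect p (r + 2) _ (p - 2) (by omega)
    (by zify [h, show 1 ≤ p by omega, show 2 ≤ p from hp]; ring) (by omega),
    EY.card_sum_eq]
  congr 1
  omega

lemma EY.K_pos (p r : ℕ) (hp : 2 ≤ p) (hr : 1 ≤ r) :
    0 < Nat.card (EY.B p r (r + 2) 1) := by
  have hfin : Finite (EY.B p r (r + 2) 1) :=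
    EY.finite_aux (fun b => ∀ i, 1 ≤ i → i ≤ 1 - 1 → ∑ j, b j % p ^ i = (r + 1) * (p ^ i - 1))
  have hne : Nonempty (EY.B p r (r + 2) 1) := by
    refine ⟨⟨Pi.single ⟨0, by omega⟩ (r * p ^ 1 - (r + 1)), ?_, ?_⟩⟩
    · simp [Finset.sum_pi_single']
    · intro i h1 h2
      omega
  exact Nat.card_pos


open Filter

/-- when `m = r+2`, the sequence `e ↦ (c_{p,r,m,e})^{1/e}` converges
to `binom(p+m−2, m−1)`; this is the complexity of `T(V_{m−2}(K[x_1,…,x_m]))` and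
its `log_p` is the Frobenius complexity of the determinantal ring `S_{m,2}`. -/
theorem stmt_12 (p r m : ℕ) (hp : p.Prime) (hr : 0 < r) (hm : m = r + 2) :
    Filter.Tendsto (fun e : ℕ => (cSeq p r m e : ℝ) ^ ((e : ℝ)⁻¹))
      Filter.atTop (nhds ((Nat.choose (p + m - 2) (m - 1) : ℝ))) := by

  subst hm
  have hp2 : 2 ≤ p := hp.two_le
  set N : ℕ := (p + r).choose (p - 1) with hN
  have htarget : (p + (r + 2) - 2).choose ((r + 2) - 1) = N := by
    rw [hN, show p + (r + 2) - 2 = p + r by omega, show (r + 2) - 1 = r + 1 by omega,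
      ← Nat.choose_symm (show r + 1 ≤ p + r by omega),
      show p + r - (r + 1) = p - 1 by omega]
  set C : ℕ := Nat.card {d : Fin (r + 2) → ℕ // (∀ j, d j < p) ∧ ∑ j, d j = (r + 1) * p - r}
    * Nat.card (EY.B p r (r + 2) 1) with hC
  clear_value N C
  have hCpos : 0 < C := by
    rw [hC, EY.N1_val p r hp2]
    exact Nat.mul_pos (Nat.choose_pos (by clear hC; omega)) (EY.K_pos p r hp2 hr)
  have hform : ∀ e : ℕ, 2 ≤ e → cSeq p r (r + 2) e = C * N ^ (e - 2) := by
    intro e he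
    rw [EY.cSeq_formula p r e hp2 hr he, EY.N_val p r hp2, hC, hN]
  have hNpos : 0 < N := by rw [hN]; exact Nat.choose_pos (by clear hC; omega)
  have hC0 : (0 : ℝ) < C := by exact_mod_cast hCpos
  have hN0 : (0 : ℝ) < N := by exact_mod_cast hNpos
  have hinv : Tendsto (fun e : ℕ => ((e : ℝ))⁻¹) atTop (nhds 0) :=
    tendsto_inv_atTop_zero.comp tendsto_natCast_atTop_atTop
  have h1 : Tendsto (fun e : ℕ => (C : ℝ) ^ ((e : ℝ)⁻¹)) atTop (nhds 1) := by
    have := (Real.continuousAt_const_rpow (b := 0) hC0.ne').tendsto.comp hinv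
    simpa [Real.rpow_zero, Function.comp_def] using this
  have hexp : Tendsto (fun e : ℕ => 1 - 2 * (e : ℝ)⁻¹) atTop (nhds 1) := by
    have h2 : Tendsto (fun e : ℕ => 2 * (e : ℝ)⁻¹) atTop (nhds 0) := by
      simpa using hinv.const_mul 2
    simpa using tendsto_const_nhds.sub h2
  have h2 : Tendsto (fun e : ℕ => (N : ℝ) ^ (1 - 2 * (e : ℝ)⁻¹)) atTop (nhds N) := by
    have := (Real.continuousAt_const_rpow (b := 1) hN0.ne').tendsto.comp hexp
    simpa [Real.rpow_one, Function.comp_def] using this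
  have hg : Tendsto (fun e : ℕ => (C : ℝ) ^ ((e : ℝ)⁻¹) * (N : ℝ) ^ (1 - 2 * (e : ℝ)⁻¹))
      atTop (nhds N) := by
    simpa using h1.mul h2
  have hEq : (fun e : ℕ => (C : ℝ) ^ ((e : ℝ)⁻¹) * (N : ℝ) ^ (1 - 2 * (e : ℝ)⁻¹))
      =ᶠ[atTop] fun e : ℕ => (cSeq p r (r + 2) e : ℝ) ^ ((e : ℝ)⁻¹) := by
    filter_upwards [Filter.eventually_ge_atTop 2] with e he
    have he0 : (e : ℝ) ≠ 0 := Nat.cast_ne_zero.mpr (by clear hC; omega)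
    rw [hform e he]
    push_cast
    rw [Real.mul_rpow hC0.le (by positivity)]
    congr 1
    rw [← Real.rpow_natCast (N : ℝ) (e - 2), ← Real.rpow_mul hN0.le]
    congr 1
    rw [Nat.cast_sub he]
    push_cast
    field_simp
  have := hg.congr' hEq
  convert this using 2
  rw [htarget]
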